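/- Let x be uniformly distributed on the unit sphere S^{d-1} ⊂ ℝ^d. Then for any matrix A ∈ ℝ^{d×d}, the expectation of ‖Ax‖ satisfies ‖A‖_* / d ≤ 𝔼‖Ax‖ ≤ ‖A‖_F / √d, where ‖A‖_* is the nuclear norm (sum of singular values) and ‖A‖_F is the Frobenius norm. -/

import Mathlib

open MeasureTheory Matrix Real RealInnerProductSpace

noncomputable def frobNorm {d : ℕ} (A : Matrix (Fin d) (Fin d) ℝ) : ℝ :=
  Real.sqrt (∑ i, ∑ j, A i j ^ 2)

noncomputable def nuclearNorm {d : ℕ} (A : Matrix (Fin d) (Fin d) ℝ) : ℝ :=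
  ∑ i, Real.sqrt ((Matrix.isHermitian_iff_isSymm.mpr (Matrix.isSymm_transpose_mul_self A) :
    (Aᵀ * A).IsHermitian).eigenvalues i)

/-- `μ` is the uniform (rotation-invariant) probability distribution on the unit
sphere `S^{d-1} ⊂ ℝ^d`. -/
def IsUniformOnSphere {d : ℕ} (μ : Measure (EuclideanSpace ℝ (Fin d))) : Prop :=
  IsProbabilityMeasure μ ∧ (∀ᵐ x ∂μ, ‖x‖ = 1) ∧
  ∀ Q : Matrix (Fin d) (Fin d) ℝ, Qᵀ * Q = 1 →
    Measure.map (fun x => Matrix.toEuclideanLin Q x) μ = μ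

/-- The Beta function. -/
noncomputable def Beta (m n : ℝ) : ℝ := Real.Gamma m * Real.Gamma n / Real.Gamma (m + n)

noncomputable def ptilde (d : ℕ) : ℝ :=
  (1 + Beta ((d : ℝ) - 1) (1/2) / Beta (((d : ℝ) - 1)/2) (1/2))⁻¹

def A2 : Matrix (Fin 2) (Fin 2) ℝ := !![0, -1; 1, 0]

noncomputable def rot2 (θ : ℝ) : Matrix (Fin 2) (Fin 2) ℝ :=
  !![Real.cos θ, -Real.sin θ; Real.sin θ, Real.cos θ]

section Aux
variable {d : ℕ} {μ : Measure (EuclideanSpace ℝ (Fin d))}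

lemma coord_apply (A : Matrix (Fin d) (Fin d) ℝ) (x : EuclideanSpace ℝ (Fin d)) (i : Fin d) :
    Matrix.toEuclideanLin A x i = ∑ j, A i j * x j := by
  simp [Matrix.toEuclideanLin_apply, Matrix.mulVec, dotProduct]

lemma cont_coord (i : Fin d) : Continuous fun x : EuclideanSpace ℝ (Fin d) => x i :=
  (continuous_apply i).comp (PiLp.continuous_ofLp 2 _)

lemma abs_coord_le (x : EuclideanSpace ℝ (Fin d)) (i : Fin d) : |x i| ≤ ‖x‖ := by
  rw [EuclideanSpace.norm_eq, ← Real.sqrt_sq_eq_abs]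
  apply Real.sqrt_le_sqrt
  exact Finset.single_le_sum (f := fun j => ‖x j‖^2) (fun j _ => by positivity) (Finset.mem_univ i)
    |>.trans_eq' (by simp [Real.norm_eq_abs, sq_abs])

lemma norm_sq_eq (x : EuclideanSpace ℝ (Fin d)) : ‖x‖^2 = ∑ i, x i ^ 2 := by
  rw [EuclideanSpace.norm_eq, Real.sq_sqrt (by positivity)]
  simp [Real.norm_eq_abs, sq_abs]

/-- change of variables under an orthogonal matrix -/
lemma integral_comp_orth (hμ : IsUniformOnSphere μ) (Q : Matrix (Fin d) (Fin d) ℝ)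
    (hQ : Qᵀ * Q = 1) (f : EuclideanSpace ℝ (Fin d) → ℝ) (hf : Continuous f) :
    ∫ x, f (Matrix.toEuclideanLin Q x) ∂μ = ∫ x, f x ∂μ := by
  conv_rhs => rw [← hμ.2.2 Q hQ]
  rw [integral_map]
  · exact ((Matrix.toEuclideanLin Q).continuous_of_finiteDimensional.measurable).aemeasurable
  · exact hf.aestronglyMeasurable

lemma integrable_coord_mul (hμ : IsUniformOnSphere μ) (i j : Fin d) :
    Integrable (fun x : EuclideanSpace ℝ (Fin d) => x i * x j) μ := by
  have : IsProbabilityMeasure μ := hμ.1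
  refine (integrable_const (1:ℝ)).mono' ?_ ?_
  · exact ((cont_coord i).mul (cont_coord j)).aestronglyMeasurable
  · filter_upwards [hμ.2.1] with x hx
    rw [Real.norm_eq_abs, abs_mul]
    calc |x i| * |x j| ≤ ‖x‖ * ‖x‖ :=
          mul_le_mul (abs_coord_le x i) (abs_coord_le x j) (abs_nonneg _) (norm_nonneg _)
    _ = 1 := by rw [hx]; ring

lemma moment_offdiag (hμ : IsUniformOnSphere μ) {i j : Fin d} (hij : i ≠ j) :
    ∫ x, x i * x j ∂μ = 0 := by
  classical
  set Q : Matrix (Fin d) (Fin d) ℝ := Matrix.diagonal (fun k => if k = i then (-1:ℝ) else 1)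
  have hQ : Qᵀ * Q = 1 := by
    simp only [Q, Matrix.diagonal_transpose, Matrix.diagonal_mul_diagonal]
    ext a b
    by_cases h2 : a = b
    · subst h2
      by_cases h : a = i <;> simp [Matrix.diagonal_apply, Matrix.one_apply, h]
    · simp [Matrix.diagonal_apply, Matrix.one_apply, h2]
  have h1 := integral_comp_orth hμ Q hQ (fun x => x i * x j)
    ((cont_coord i).mul (cont_coord j))
  have h2 : ∀ x : EuclideanSpace ℝ (Fin d),
      (Matrix.toEuclideanLin Q x) i * (Matrix.toEuclideanLin Q x) j = -(x i * x j) := by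
    intro x
    rw [coord_apply, coord_apply]
    have e1 : ∑ k, Q i k * x k = -(x i) := by
      rw [Finset.sum_eq_single i]
      · simp [Q, Matrix.diagonal_apply_eq]
      · intro k _ hk; simp [Q, Matrix.diagonal_apply_ne' _ hk]
      · simp
    have e2 : ∑ k, Q j k * x k = x j := by
      rw [Finset.sum_eq_single j]
      · simp [Q, Matrix.diagonal_apply_eq, hij.symm]
      · intro k _ hk; simp [Q, Matrix.diagonal_apply_ne' _ hk]
      · simp
    rw [e1, e2]; ring
  simp_rw [h2] at h1
  rw [integral_neg] at h1
  linarith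

lemma moment_diag_eq (hμ : IsUniformOnSphere μ) (i j : Fin d) :
    ∫ x, (x i)^2 ∂μ = ∫ x, (x j)^2 ∂μ := by
  classical
  set σ := Equiv.swap i j
  set Q : Matrix (Fin d) (Fin d) ℝ := Matrix.of (fun a b => if σ a = b then (1:ℝ) else 0)
  have hQ : Qᵀ * Q = 1 := by
    ext a b
    simp only [Matrix.mul_apply, Matrix.transpose_apply, Matrix.one_apply, Q, Matrix.of_apply]
    rw [Finset.sum_eq_single (σ.symm a)]
    · by_cases h : a = b <;> simp [h, Equiv.apply_eq_iff_eq_symm_apply]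
    · intro c _ hc
      have : σ c ≠ a := fun h => hc (by simp [← h])
      simp [this]
    · simp
  have hQx : ∀ (x : EuclideanSpace ℝ (Fin d)) (a : Fin d),
      Matrix.toEuclideanLin Q x a = x (σ a) := by
    intro x a
    rw [coord_apply, Finset.sum_eq_single (σ a)]
    · simp [Q]
    · intro b _ hb
      have : σ a ≠ b := fun h => hb h.symm
      simp [Q, this]
    · simp
  have h1 := integral_comp_orth hμ Q hQ (fun x => (x i)^2) ((cont_coord i).pow 2)
  simp_rw [hQx] at h1
  have : σ i = j := Equiv.swap_apply_left i j
  rw [this] at h1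
  exact h1.symm

lemma moment (hμ : IsUniformOnSphere μ) (hd : 1 ≤ d) (i j : Fin d) :
    ∫ x, x i * x j ∂μ = if i = j then (d:ℝ)⁻¹ else 0 := by
  by_cases h : i = j
  · subst h
    simp only [if_pos rfl]
    have : IsProbabilityMeasure μ := hμ.1
    have hsum : ∑ k, ∫ x, (x k)^2 ∂μ = 1 := by
      rw [← integral_finset_sum]
      · have : ∫ x, (∑ k, (x k)^2) ∂μ = ∫ (_ : EuclideanSpace ℝ (Fin d)), (1:ℝ) ∂μ := by
          apply integral_congr_ae
          filter_upwards [hμ.2.1] with x hx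
          rw [← norm_sq_eq, hx, one_pow]
        rw [this, integral_const]; simp
      · intro k _
        simpa [pow_two] using integrable_coord_mul hμ k k
    have hall : ∀ k, ∫ x, (x k)^2 ∂μ = ∫ x, (x i)^2 ∂μ := fun k => moment_diag_eq hμ k i
    rw [Finset.sum_congr rfl (fun k _ => hall k), Finset.sum_const, Finset.card_univ,
      Fintype.card_fin, nsmul_eq_mul] at hsum
    have hd0 : (d:ℝ) ≠ 0 := by positivity
    have : ∫ x, (x i)^2 ∂μ = (d:ℝ)⁻¹ := by field_simp at hsum ⊢; linarith
    simpa [pow_two] using this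
  · simp [h, moment_offdiag hμ h]

lemma integral_quadform (hμ : IsUniformOnSphere μ) (hd : 1 ≤ d)
    (M : Matrix (Fin d) (Fin d) ℝ) :
    ∫ x, (∑ i, ∑ j, M i j * (x i * x j)) ∂μ = M.trace / d := by
  rw [integral_finset_sum]
  · have : ∀ i, ∫ x, (∑ j, M i j * (x i * x j)) ∂μ = ∑ j, M i j * (if i = j then (d:ℝ)⁻¹ else 0) := by
      intro i
      rw [integral_finset_sum]
      · exact Finset.sum_congr rfl fun j _ => by
          rw [integral_const_mul, moment hμ hd i j]
      · exact fun j _ => (integrable_coord_mul hμ i j).const_mul _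
    simp_rw [this, mul_ite, mul_zero, Finset.sum_ite_eq, Finset.mem_univ, if_pos]
    simp [Matrix.trace, Matrix.diag, div_eq_mul_inv, Finset.sum_mul]
  · exact fun i _ => integrable_finset_sum _ fun j _ => (integrable_coord_mul hμ i j).const_mul _


noncomputable def sqM (A : Matrix (Fin d) (Fin d) ℝ) : Matrix (Fin d) (Fin d) ℝ :=
  ((Matrix.isHermitian_conjTranspose_mul_self A).eigenvectorUnitary : Matrix (Fin d) (Fin d) ℝ) *
    Matrix.diagonal (fun i => Real.sqrt ((Matrix.isHermitian_conjTranspose_mul_self A).eigenvalues i)) *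
    star ((Matrix.isHermitian_conjTranspose_mul_self A).eigenvectorUnitary : Matrix (Fin d) (Fin d) ℝ)

lemma sqM_transpose (A : Matrix (Fin d) (Fin d) ℝ) : (sqM A)ᵀ = sqM A := by
  rw [← Matrix.conjTranspose_eq_transpose_of_trivial]
  unfold sqM
  set V := ((Matrix.isHermitian_conjTranspose_mul_self A).eigenvectorUnitary : Matrix (Fin d) (Fin d) ℝ)
  rw [Matrix.star_eq_conjTranspose]
  rw [Matrix.conjTranspose_mul, Matrix.conjTranspose_mul, Matrix.conjTranspose_conjTranspose,
    Matrix.diagonal_conjTranspose, mul_assoc]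
  congr 3

lemma sqM_mul_sqM (A : Matrix (Fin d) (Fin d) ℝ) : sqM A * sqM A = Aᴴ * A := by
  unfold sqM
  set hH := Matrix.isHermitian_conjTranspose_mul_self A
  set V := (hH.eigenvectorUnitary : Matrix (Fin d) (Fin d) ℝ) with hV
  have hVV : star V * V = 1 := (Unitary.mem_iff.mp hH.eigenvectorUnitary.2).1
  have e : V * Matrix.diagonal (fun i => Real.sqrt (hH.eigenvalues i)) * star V *
      (V * Matrix.diagonal (fun i => Real.sqrt (hH.eigenvalues i)) * star V)
      = V * (Matrix.diagonal (fun i => Real.sqrt (hH.eigenvalues i)) *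
          Matrix.diagonal (fun i => Real.sqrt (hH.eigenvalues i))) * star V := by
    simp only [mul_assoc]
    rw [← mul_assoc (star V) V, hVV, one_mul]
  rw [e, Matrix.diagonal_mul_diagonal]
  have : (fun i => Real.sqrt (hH.eigenvalues i) * Real.sqrt (hH.eigenvalues i))
      = hH.eigenvalues := by
    funext i
    exact Real.mul_self_sqrt (Matrix.eigenvalues_conjTranspose_mul_self_nonneg A i)
  rw [this]
  conv_rhs => rw [hH.spectral_theorem]
  rw [Unitary.conjStarAlgAut_apply, ← hV]
  congr 2

lemma trace_sqM (A : Matrix (Fin d) (Fin d) ℝ) :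
    (sqM A).trace = ∑ i, Real.sqrt ((Matrix.isHermitian_conjTranspose_mul_self A).eigenvalues i) := by
  unfold sqM
  set hH := Matrix.isHermitian_conjTranspose_mul_self A
  set V := (hH.eigenvectorUnitary : Matrix (Fin d) (Fin d) ℝ) with hV
  have hVV : star V * V = 1 := (Unitary.mem_iff.mp hH.eigenvectorUnitary.2).1
  rw [Matrix.trace_mul_cycle, hVV, one_mul, Matrix.trace_diagonal]

end Aux

section Alg
variable {d : ℕ}

lemma sum_mulVec_sq (M : Matrix (Fin d) (Fin d) ℝ) (x : EuclideanSpace ℝ (Fin d)) :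
    ∑ i, (∑ j, M i j * x j)^2 = ∑ j, ∑ k, (Mᵀ * M) j k * (x j * x k) := by
  have h1 : ∀ i : Fin d, (∑ j, M i j * x j)^2 = ∑ j, ∑ k, M i j * M i k * (x j * x k) := by
    intro i
    rw [pow_two, Finset.sum_mul_sum]
    exact Finset.sum_congr rfl fun j _ => Finset.sum_congr rfl fun k _ => by ring
  simp_rw [h1, Matrix.mul_apply, Matrix.transpose_apply, Finset.sum_mul]
  rw [Finset.sum_comm]
  exact Finset.sum_congr rfl fun j _ => Finset.sum_comm

lemma norm_toEuclideanLin_sq (M : Matrix (Fin d) (Fin d) ℝ) (x : EuclideanSpace ℝ (Fin d)) :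
    ‖Matrix.toEuclideanLin M x‖^2 = ∑ i, ∑ j, (Mᵀ * M) i j * (x i * x j) := by
  rw [norm_sq_eq]
  simp_rw [coord_apply]
  exact sum_mulVec_sq M x

lemma inner_toEuclideanLin (M : Matrix (Fin d) (Fin d) ℝ) (x : EuclideanSpace ℝ (Fin d)) :
    ⟪Matrix.toEuclideanLin M x, x⟫ = ∑ i, ∑ j, M i j * (x i * x j) := by
  rw [PiLp.inner_apply]
  simp_rw [RCLike.inner_apply, starRingEnd_apply, star_trivial, coord_apply, Finset.mul_sum]
  exact Finset.sum_congr rfl fun i _ => Finset.sum_congr rfl fun j _ => by ring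

lemma norm_eq_norm_sqM (A : Matrix (Fin d) (Fin d) ℝ) (x : EuclideanSpace ℝ (Fin d)) :
    ‖Matrix.toEuclideanLin A x‖ = ‖Matrix.toEuclideanLin (sqM A) x‖ := by
  have h : ‖Matrix.toEuclideanLin A x‖^2 = ‖Matrix.toEuclideanLin (sqM A) x‖^2 := by
    rw [norm_toEuclideanLin_sq, norm_toEuclideanLin_sq, sqM_transpose, sqM_mul_sqM,
      ← Matrix.conjTranspose_eq_transpose_of_trivial]
  calc ‖Matrix.toEuclideanLin A x‖ = Real.sqrt (‖Matrix.toEuclideanLin A x‖^2) :=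
        (Real.sqrt_sq (norm_nonneg _)).symm
  _ = Real.sqrt (‖Matrix.toEuclideanLin (sqM A) x‖^2) := by rw [h]
  _ = _ := Real.sqrt_sq (norm_nonneg _)

end Alg

theorem stmt2 {d : ℕ} (hd : 1 ≤ d) (μ : Measure (EuclideanSpace ℝ (Fin d)))
    (hμ : IsUniformOnSphere μ) (A : Matrix (Fin d) (Fin d) ℝ) :
    nuclearNorm A / d ≤ (∫ x, ‖Matrix.toEuclideanLin A x‖ ∂μ) ∧
    (∫ x, ‖Matrix.toEuclideanLin A x‖ ∂μ) ≤ frobNorm A / Real.sqrt d := by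
  haveI : IsProbabilityMeasure μ := hμ.1
  set L := LinearMap.toContinuousLinearMap (Matrix.toEuclideanLin A) with hL
  have hLA : ∀ x, Matrix.toEuclideanLin A x = L x := fun x => rfl
  have hcont : Continuous fun x : EuclideanSpace ℝ (Fin d) => ‖Matrix.toEuclideanLin A x‖ := by
    simp_rw [hLA]; exact L.continuous.norm
  have hint : Integrable (fun x => ‖Matrix.toEuclideanLin A x‖) μ := by
    refine (integrable_const ‖L‖).mono' hcont.aestronglyMeasurable ?_
    filter_upwards [hμ.2.1] with x hx
    rw [Real.norm_eq_abs, abs_norm, hLA]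
    calc ‖L x‖ ≤ ‖L‖ * ‖x‖ := L.le_opNorm x
    _ = ‖L‖ := by rw [hx, mul_one]
  have hqf_int : ∀ M : Matrix (Fin d) (Fin d) ℝ,
      Integrable (fun x : EuclideanSpace ℝ (Fin d) => ∑ i, ∑ j, M i j * (x i * x j)) μ :=
    fun M => integrable_finset_sum _ fun i _ => integrable_finset_sum _ fun j _ =>
      (integrable_coord_mul hμ i j).const_mul _
  constructor
  · -- lower bound
    have key : ∫ x, (∑ i, ∑ j, (sqM A) i j * (x i * x j)) ∂μ = (sqM A).trace / d :=
      integral_quadform hμ hd (sqM A)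
    rw [trace_sqM] at key
    rw [show nuclearNorm A = ∑ i, Real.sqrt ((Matrix.isHermitian_conjTranspose_mul_self A).eigenvalues i) from rfl,
      ← key]
    apply integral_mono_ae (hqf_int (sqM A)) hint
    filter_upwards [hμ.2.1] with x hx
    calc ∑ i, ∑ j, (sqM A) i j * (x i * x j)
        = ⟪Matrix.toEuclideanLin (sqM A) x, x⟫ := (inner_toEuclideanLin _ x).symm
    _ ≤ ‖Matrix.toEuclideanLin (sqM A) x‖ * ‖x‖ := real_inner_le_norm _ _
    _ = ‖Matrix.toEuclideanLin A x‖ := by rw [hx, mul_one, ← norm_eq_norm_sqM]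
  · -- upper bound
    set I := ∫ x, ‖Matrix.toEuclideanLin A x‖ ∂μ with hI
    have hI0 : 0 ≤ I := integral_nonneg fun x => norm_nonneg _
    have hsq_int : Integrable (fun x => ‖Matrix.toEuclideanLin A x‖^2) μ := by
      have : (fun x : EuclideanSpace ℝ (Fin d) => ‖Matrix.toEuclideanLin A x‖^2)
          = fun x => ∑ i, ∑ j, (Aᵀ * A) i j * (x i * x j) := by
        funext x; exact norm_toEuclideanLin_sq A x
      rw [this]; exact hqf_int _
    have hsqval : ∫ x, ‖Matrix.toEuclideanLin A x‖^2 ∂μ = (∑ i, ∑ j, A i j ^ 2) / d := by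
      simp_rw [norm_toEuclideanLin_sq]
      rw [integral_quadform hμ hd]
      congr 1
      rw [Matrix.trace]
      simp_rw [Matrix.diag, Matrix.mul_apply, Matrix.transpose_apply, ← pow_two]
      exact Finset.sum_comm
    have hvar : I^2 ≤ ∫ x, ‖Matrix.toEuclideanLin A x‖^2 ∂μ := by
      have h0 : 0 ≤ ∫ x, (‖Matrix.toEuclideanLin A x‖ - I)^2 ∂μ :=
        integral_nonneg fun x => sq_nonneg _
      have hexp : ∫ x, (‖Matrix.toEuclideanLin A x‖ - I)^2 ∂μ
          = (∫ x, ‖Matrix.toEuclideanLin A x‖^2 ∂μ) - I^2 := by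
        have e : ∀ x : EuclideanSpace ℝ (Fin d), (‖Matrix.toEuclideanLin A x‖ - I)^2
            = ‖Matrix.toEuclideanLin A x‖^2 - (2*I) * ‖Matrix.toEuclideanLin A x‖ + I^2 := by
          intro x; ring
        simp_rw [e]
        have i1 : Integrable (fun x => ‖Matrix.toEuclideanLin A x‖^2
            - 2*I*‖Matrix.toEuclideanLin A x‖) μ := hsq_int.sub (hint.const_mul _)
        rw [integral_add i1 (integrable_const _),
          integral_sub hsq_int (hint.const_mul _), integral_const_mul, integral_const]
        simp [← hI]
        ring
      linarith [hexp ▸ h0]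
    rw [hsqval] at hvar
    have hd0 : (0:ℝ) < d := by positivity
    have : I ≤ Real.sqrt ((∑ i, ∑ j, A i j ^ 2) / d) := by
      rw [show I = Real.sqrt (I^2) from (Real.sqrt_sq hI0).symm]
      exact Real.sqrt_le_sqrt hvar
    calc I ≤ Real.sqrt ((∑ i, ∑ j, A i j ^ 2) / d) := this
    _ = frobNorm A / Real.sqrt d := by
      rw [Real.sqrt_div (by positivity), frobNorm]
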